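/- Upper bound on the eigenvalue by the degradation rate. If U is a decaying eigenfunction with eigenvalue Λ for the parameter V ≥ 0, where the degradation rate is constant μ(x) ≡ μ₀ and τ ≥ 0, and if ∫₀^∞ x·U(x)dx > 0, then Λ ≤ μ₀. -/

import Mathlib

open MeasureTheory Set Filter Topology

/-- A *decaying eigenfunction* `U` (with `U'` the pointwise derivative of `τ U`) with
eigenvalue `Λ` for the parameter `V` of the prion growth-fragmentation operator:
`U ≥ 0`, `τ U` is differentiable on `(0,∞)` with derivative `U'`, the eigenvalue equation
`V (τU)'(x) + (μ(x)+β(x)) U(x) − 2 ∫ₓ^∞ β(y) κ(x,y) U(y) dy = Λ U(x)` holds for `x > 0`,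
the functions `U, xU, τU, μU, xμU, βU, xβU, (τU)'` are integrable on `(0,∞)`,
`β(y)κ(x,y)U(y)` and `x β(y)κ(x,y)U(y)` are integrable on `{0 < x < y}`, and
`τU → 0` at `0⁺`, `τU → 0` and `x τU → 0` at `∞`. -/
structure DecayingEigenfunction (V Lam : ℝ) (tau mu beta : ℝ → ℝ)
    (kappa : ℝ → ℝ → ℝ) (U U' : ℝ → ℝ) : Prop where
  nonneg : ∀ x > 0, 0 ≤ U x
  hasDeriv : ∀ x > 0, HasDerivAt (fun y => tau y * U y) (U' x) x
  eigen : ∀ x > 0,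
    V * U' x + (mu x + beta x) * U x - 2 * ∫ y in Ioi x, beta y * kappa x y * U y
      = Lam * U x
  int_U : IntegrableOn U (Ioi 0)
  int_xU : IntegrableOn (fun x => x * U x) (Ioi 0)
  int_tauU : IntegrableOn (fun x => tau x * U x) (Ioi 0)
  int_muU : IntegrableOn (fun x => mu x * U x) (Ioi 0)
  int_xmuU : IntegrableOn (fun x => x * mu x * U x) (Ioi 0)
  int_betaU : IntegrableOn (fun x => beta x * U x) (Ioi 0)
  int_xbetaU : IntegrableOn (fun x => x * beta x * U x) (Ioi 0)
  int_U' : IntegrableOn U' (Ioi 0)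
  int_frag : IntegrableOn (fun p : ℝ × ℝ => beta p.2 * kappa p.1 p.2 * U p.2)
      {p : ℝ × ℝ | 0 < p.1 ∧ p.1 < p.2}
  int_xfrag : IntegrableOn (fun p : ℝ × ℝ => p.1 * (beta p.2 * kappa p.1 p.2 * U p.2))
      {p : ℝ × ℝ | 0 < p.1 ∧ p.1 < p.2}
  lim_zero : Tendsto (fun x => tau x * U x) (nhdsWithin 0 (Ioi 0)) (nhds 0)
  lim_top : Tendsto (fun x => tau x * U x) atTop (nhds 0)
  lim_xtop : Tendsto (fun x => x * (tau x * U x)) atTop (nhds 0)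

/-- **Upper bound on the eigenvalue by the degradation rate**: for `V ≥ 0`, a constant
degradation rate `μ ≡ μ₀` and nonnegative `τ`, any decaying eigenfunction with positive
first moment forces `Λ ≤ μ₀`. -/
theorem eigenvalue_le_degradation
    (V Lam mu0 : ℝ) (hV : 0 ≤ V) (hmu0 : 0 ≤ mu0)
    (tau beta : ℝ → ℝ) (kappa : ℝ → ℝ → ℝ) (U U' : ℝ → ℝ)
    (htau_nn : ∀ x > 0, 0 ≤ tau x)
    (hbeta_nn : ∀ x > 0, 0 ≤ beta x)
    (hkap_nn : ∀ x y : ℝ, 0 ≤ kappa x y)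
    (hkap_supp : ∀ x y : ℝ, y ≤ x → kappa x y = 0)
    (hkap_mass : ∀ y > 0, ∫ x in (0:ℝ)..y, kappa x y = 1)
    (hkap_mom : ∀ y > 0, ∫ x in (0:ℝ)..y, x * kappa x y = y / 2)
    (hU : DecayingEigenfunction V Lam tau (fun _ => mu0) beta kappa U U')
    (hpos : 0 < ∫ x in Ioi (0:ℝ), x * U x) :
    Lam ≤ mu0 := by
  classical
  set S : Set (ℝ × ℝ) := {p : ℝ × ℝ | 0 < p.1 ∧ p.1 < p.2} with hSdef
  set F : ℝ × ℝ → ℝ := fun p => p.1 * (beta p.2 * kappa p.1 p.2 * U p.2) with hFdef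
  have hSmeas : MeasurableSet S := by
    have : S = {p : ℝ × ℝ | 0 < p.1} ∩ {p : ℝ × ℝ | p.1 < p.2} := rfl
    rw [this]
    exact (measurableSet_lt measurable_const measurable_fst).inter
      (measurableSet_lt measurable_fst measurable_snd)
  set P : Set (ℝ × ℝ) := Ioi (0:ℝ) ×ˢ Ioi (0:ℝ) with hPdef
  have hPmeas : MeasurableSet P := measurableSet_Ioi.prod measurableSet_Ioi
  have hSsub : S ⊆ P := fun p hp => ⟨hp.1, hp.1.trans hp.2⟩
  have hFzero : ∀ p ∈ P \ S, F p = 0 := by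
    rintro ⟨x, y⟩ ⟨⟨hx, hy⟩, hns⟩
    have hyx : y ≤ x := by
      by_contra h
      exact hns ⟨hx, lt_of_not_ge h⟩
    simp [hFdef, hkap_supp x y hyx]
  have hPunion : P = S ∪ (P \ S) := (union_diff_cancel hSsub).symm
  -- Integrability of F on P
  have hIP : IntegrableOn F P := by
    rw [hPunion]
    exact hU.int_xfrag.union
      (integrableOn_zero.congr_fun (fun p hp => (hFzero p hp).symm) (hPmeas.diff hSmeas))
  have hISP : ∫ p in S, F p = ∫ p in P, F p := by
    rw [hPunion, setIntegral_union disjoint_sdiff_right (hPmeas.diff hSmeas)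
      hU.int_xfrag (integrableOn_zero.congr_fun (fun p hp => (hFzero p hp).symm)
        (hPmeas.diff hSmeas))]
    rw [setIntegral_congr_fun (hPmeas.diff hSmeas) hFzero]
    simp
    rfl
  -- F as integrable w.r.t. the product of restricted measures
  have hν : Integrable F ((volume.restrict (Ioi (0:ℝ))).prod (volume.restrict (Ioi (0:ℝ)))) := by
    rw [Measure.prod_restrict]
    exact hIP
  -- Fubini in the order y-then-x: compute the value
  have hinner : ∀ y ∈ Ioi (0:ℝ), (∫ x in Ioi (0:ℝ), F (x, y)) = y * beta y * U y / 2 := by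
    intro y hy
    have h1 : EqOn (fun x => F (x, y))
        (fun x => (beta y * U y) * ((Ioc (0:ℝ) y).indicator (fun x => x * kappa x y) x))
        (Ioi (0:ℝ)) := by
      intro x hx
      rcases le_or_gt x y with h | h
      · have : x ∈ Ioc (0:ℝ) y := ⟨hx, h⟩
        simp only [indicator_of_mem this, hFdef]
        ring
      · have hxy : x ∉ Ioc (0:ℝ) y := fun hc => absurd hc.2 (not_le.mpr h)
        simp [indicator_of_notMem hxy, hFdef, hkap_supp x y h.le]
    rw [setIntegral_congr_fun measurableSet_Ioi h1, integral_const_mul _ _,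
      setIntegral_indicator measurableSet_Ioc]
    have h2 : Ioi (0:ℝ) ∩ Ioc (0:ℝ) y = Ioc (0:ℝ) y :=
      inter_eq_self_of_subset_right Ioc_subset_Ioi_self
    rw [h2, ← intervalIntegral.integral_of_le hy.out.le, hkap_mom y hy]
    ring
  have hval : ∫ p, F p ∂((volume.restrict (Ioi (0:ℝ))).prod (volume.restrict (Ioi (0:ℝ))))
      = (∫ y in Ioi (0:ℝ), y * beta y * U y) / 2 := by
    rw [integral_prod_symm F hν]
    rw [setIntegral_congr_fun measurableSet_Ioi (fun y hy => hinner y hy)]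
    rw [← integral_div]
  -- the marginal
  set g : ℝ → ℝ := fun x => ∫ y in Ioi (0:ℝ), F (x, y) with hgdef
  have hg_int : IntegrableOn g (Ioi (0:ℝ)) := hν.integral_prod_left
  have hg_val : ∫ x in Ioi (0:ℝ), g x = (∫ y in Ioi (0:ℝ), y * beta y * U y) / 2 := by
    rw [← hval, integral_prod F hν]
  have hgx : ∀ x ∈ Ioi (0:ℝ), g x = x * ∫ y in Ioi x, beta y * kappa x y * U y := by
    intro x hx
    have e1 : g x = x * ∫ y in Ioi (0:ℝ), beta y * kappa x y * U y := by
      simp only [hgdef, hFdef]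
      rw [integral_const_mul _ _]
    rw [e1]
    congr 1
    have h1 : EqOn (fun y => beta y * kappa x y * U y)
        ((Ioi x).indicator (fun y => beta y * kappa x y * U y)) (Ioi (0:ℝ)) := by
      intro y hy
      rcases lt_or_ge x y with h | h
      · exact (indicator_of_mem (show y ∈ Ioi x from h) (fun y => beta y * kappa x y * U y)).symm
      · rw [indicator_of_notMem (show y ∉ Ioi x by simpa using h)]
        show beta y * kappa x y * U y = 0
        rw [hkap_supp x y h]; ring
    rw [setIntegral_congr_fun measurableSet_Ioi h1, setIntegral_indicator measurableSet_Ioi,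
      inter_eq_self_of_subset_right (Ioi_subset_Ioi hx.out.le)]
  -- FTC on (0, ∞)
  set G : ℝ → ℝ := fun x => V * (tau x * U x + x * U' x) with hGdef
  set fb : ℝ → ℝ := fun x => V * (x * (tau x * U x)) with hfbdef
  have hderivAll : ∀ x ∈ Ioi (0:ℝ), HasDerivAt fb (G x) x := by
    intro x hx
    have h0 : HasDerivAt (fun y : ℝ => y * (tau y * U y))
        (1 * (tau x * U x) + x * U' x) x := (hasDerivAt_id x).mul (hU.hasDeriv x hx)
    have h1 := h0.const_mul V
    refine h1.congr_deriv ?_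
    show V * (1 * (tau x * U x) + x * U' x) = V * (tau x * U x + x * U' x)
    ring
  have hEq : EqOn (fun x => V * (tau x * U x) + Lam * (x * U x) - mu0 * (x * U x)
      - x * beta x * U x + 2 * g x) G (Ioi (0:ℝ)) := by
    intro x hx
    have e : V * U' x + (mu0 + beta x) * U x
        - 2 * ∫ y in Ioi x, beta y * kappa x y * U y = Lam * U x := hU.eigen x hx
    have hg := hgx x hx
    simp only [hGdef]
    linear_combination 2 * hg - x * e
  have hh_int : IntegrableOn (fun x => V * (tau x * U x) + Lam * (x * U x) - mu0 * (x * U x)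
      - x * beta x * U x + 2 * g x) (Ioi (0:ℝ)) :=
    ((((hU.int_tauU.const_mul V).add (hU.int_xU.const_mul Lam)).sub
      (hU.int_xU.const_mul mu0)).sub hU.int_xbetaU).add (hg_int.const_mul 2)
  have hG_int : IntegrableOn G (Ioi (0:ℝ)) := hh_int.congr_fun hEq measurableSet_Ioi
  -- the sequence of sets
  set s : ℕ → Set ℝ := fun n => Ioi (((n:ℝ)+1)⁻¹) with hsdef
  have hapos : ∀ n : ℕ, (0:ℝ) < ((n:ℝ)+1)⁻¹ := fun n => by positivity
  have hsm : ∀ n, MeasurableSet (s n) := fun n => measurableSet_Ioi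
  have hmono : Monotone s := by
    intro n m h
    apply Ioi_subset_Ioi
    apply inv_anti₀ (by positivity)
    have : (n:ℝ) ≤ (m:ℝ) := by exact_mod_cast h
    linarith
  have hUion : ⋃ n, s n = Ioi (0:ℝ) := by
    ext x
    simp only [mem_iUnion, hsdef, mem_Ioi]
    constructor
    · rintro ⟨n, hn⟩
      exact (hapos n).trans hn
    · intro hx
      obtain ⟨n, hn⟩ := exists_nat_gt x⁻¹
      refine ⟨n, ?_⟩
      have h2 : x⁻¹ < (n:ℝ) + 1 := hn.trans (lt_add_one _)
      exact (inv_lt_comm₀ (by positivity) hx).mpr h2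
  have hfb_top : Tendsto fb atTop (𝓝 0) := by
    have := hU.lim_xtop.const_mul V
    simpa using this
  have hvaln : ∀ n : ℕ, ∫ x in s n, G x = 0 - fb (((n:ℝ)+1)⁻¹) := by
    intro n
    exact integral_Ioi_of_hasDerivAt_of_tendsto
      ((hderivAll _ (hapos n)).continuousAt.continuousWithinAt)
      (fun x hx => hderivAll x ((hapos n).trans hx))
      (hG_int.mono_set (Ioi_subset_Ioi (hapos n).le)) hfb_top
  have hT1 : Tendsto (fun n => ∫ x in s n, G x) atTop (𝓝 (∫ x in Ioi (0:ℝ), G x)) := by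
    have := tendsto_setIntegral_of_monotone hsm hmono (hUion ▸ hG_int)
    rwa [hUion] at this
  have ha0 : Tendsto (fun n : ℕ => ((n:ℝ)+1)⁻¹) (atTop) (𝓝[>] (0:ℝ)) := by
    apply tendsto_nhdsWithin_of_tendsto_nhds_of_eventually_within
    · have := tendsto_one_div_add_atTop_nhds_zero_nat (𝕜 := ℝ)
      simpa [one_div] using this
    · exact Eventually.of_forall fun n => hapos n
  have hfb0 : Tendsto fb (𝓝[>] (0:ℝ)) (𝓝 0) := by
    have h1 : Tendsto (fun x : ℝ => x * (tau x * U x)) (𝓝[>] (0:ℝ)) (𝓝 0) := by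
      have := (tendsto_id.mono_left nhdsWithin_le_nhds).mul hU.lim_zero
      simpa using this
    have := h1.const_mul V
    simpa using this
  have hT2 : Tendsto (fun n => ∫ x in s n, G x) atTop (𝓝 0) := by
    have : Tendsto (fun n : ℕ => 0 - fb (((n:ℝ)+1)⁻¹)) atTop (𝓝 (0 - 0)) :=
      tendsto_const_nhds.sub (hfb0.comp ha0)
    simp only [sub_zero] at this
    exact Tendsto.congr (fun n => (hvaln n).symm) this
  have hGzero : ∫ x in Ioi (0:ℝ), G x = 0 := tendsto_nhds_unique hT1 hT2
  -- assemble
  set J : ℝ := ∫ x in Ioi (0:ℝ), x * U x with hJdef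
  set B : ℝ := ∫ x in Ioi (0:ℝ), x * beta x * U x with hBdef
  set T : ℝ := ∫ x in Ioi (0:ℝ), tau x * U x with hTdef
  have hsplit : ∫ x in Ioi (0:ℝ), G x = V * T + Lam * J - mu0 * J - B + 2 * (B / 2) := by
    have i1 : IntegrableOn (fun x => V * (tau x * U x)) (Ioi (0:ℝ)) := hU.int_tauU.const_mul V
    have i2 : IntegrableOn (fun x => Lam * (x * U x)) (Ioi (0:ℝ)) := hU.int_xU.const_mul Lam
    have i3 : IntegrableOn (fun x => mu0 * (x * U x)) (Ioi (0:ℝ)) := hU.int_xU.const_mul mu0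
    have i4 : IntegrableOn (fun x => x * beta x * U x) (Ioi (0:ℝ)) := hU.int_xbetaU
    have i5 : IntegrableOn (fun x => 2 * g x) (Ioi (0:ℝ)) := hg_int.const_mul 2
    have i12 : IntegrableOn (fun x => V * (tau x * U x) + Lam * (x * U x)) (Ioi (0:ℝ)) :=
      i1.add i2
    have i123 : IntegrableOn (fun x => V * (tau x * U x) + Lam * (x * U x)
        - mu0 * (x * U x)) (Ioi (0:ℝ)) := i12.sub i3
    have i1234 : IntegrableOn (fun x => V * (tau x * U x) + Lam * (x * U x)
        - mu0 * (x * U x) - x * beta x * U x) (Ioi (0:ℝ)) := i123.sub i4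
    calc ∫ x in Ioi (0:ℝ), G x
        = ∫ x in Ioi (0:ℝ), (V * (tau x * U x) + Lam * (x * U x)
            - mu0 * (x * U x) - x * beta x * U x + 2 * g x) :=
          (setIntegral_congr_fun measurableSet_Ioi hEq).symm
      _ = (∫ x in Ioi (0:ℝ), (V * (tau x * U x) + Lam * (x * U x)
            - mu0 * (x * U x) - x * beta x * U x)) + ∫ x in Ioi (0:ℝ), 2 * g x :=
          integral_add i1234 i5
      _ = ((∫ x in Ioi (0:ℝ), (V * (tau x * U x) + Lam * (x * U x)
            - mu0 * (x * U x))) - ∫ x in Ioi (0:ℝ), x * beta x * U x)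
            + ∫ x in Ioi (0:ℝ), 2 * g x := by rw [integral_sub i123 i4]
      _ = (((∫ x in Ioi (0:ℝ), (V * (tau x * U x) + Lam * (x * U x)))
            - ∫ x in Ioi (0:ℝ), mu0 * (x * U x)) - ∫ x in Ioi (0:ℝ), x * beta x * U x)
            + ∫ x in Ioi (0:ℝ), 2 * g x := by rw [integral_sub i12 i3]
      _ = ((((∫ x in Ioi (0:ℝ), V * (tau x * U x)) + ∫ x in Ioi (0:ℝ), Lam * (x * U x))
            - ∫ x in Ioi (0:ℝ), mu0 * (x * U x)) - ∫ x in Ioi (0:ℝ), x * beta x * U x)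
            + ∫ x in Ioi (0:ℝ), 2 * g x := by rw [integral_add i1 i2]
      _ = V * T + Lam * J - mu0 * J - B + 2 * (B / 2) := by
          rw [integral_const_mul, integral_const_mul, integral_const_mul, integral_const_mul, hg_val]
  have hT_nn : 0 ≤ T := setIntegral_nonneg measurableSet_Ioi
    (fun x hx => mul_nonneg (htau_nn x hx) (hU.nonneg x hx))
  have hkey : Lam * J ≤ mu0 * J := by
    have h0 : V * T + Lam * J - mu0 * J - B + 2 * (B / 2) = 0 := by
      rw [← hsplit]; exact hGzero
    nlinarith [mul_nonneg hV hT_nn]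
  exact le_of_mul_le_mul_right (by simpa [mul_comm] using hkey) hpos
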